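/- Let G be a transitive permutation group on a finite set Ω of size n that is not 2-homogeneous. Then G fails the (2,l)-universal transversal property for every l ≤ (n+1)/2; equivalently the threshold satisfies t(G,2) ≥ (n+3)/2. -/

import Mathlib

variable {Ω : Type*} [Fintype Ω] [DecidableEq Ω]

/-- `P` is a partition of the finite set `B` into exactly `k` nonempty parts. -/
def IsKPartition (P : Finset (Finset Ω)) (B : Finset Ω) (k : ℕ) : Prop :=
  P.card = k ∧ (∀ p ∈ P, p.Nonempty) ∧
    (∀ p ∈ P, ∀ q ∈ P, p ≠ q → Disjoint p q) ∧ P.biUnion id = B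

/-- `G` has the `(k,l)`-universal transversal property. -/
def HasUT (G : Subgroup (Equiv.Perm Ω)) (k l : ℕ) : Prop :=
  ∀ A B : Finset Ω, A.card = k → B.card = l →
    ∀ P : Finset (Finset Ω), IsKPartition P B k →
      ∃ g ∈ G, ∀ p ∈ P, ((A.image g) ∩ p).card = 1

/-- `G` is `m`-homogeneous. -/
def IsHomogeneous (G : Subgroup (Equiv.Perm Ω)) (m : ℕ) : Prop :=
  ∀ A B : Finset Ω, A.card = m → B.card = m → ∃ g ∈ G, A.image g = B

open Classical in
/-- Neighbours of `v` in the orbital graph of the pair `A`. -/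
noncomputable def orbNbrs (G : Subgroup (Equiv.Perm Ω)) (v : Ω) (A : Finset Ω) : Finset Ω :=
  Finset.univ.filter (fun u => u ≠ v ∧ ∃ g ∈ G, A.image g = ({v, u} : Finset Ω))

lemma aux_notUT (G : Subgroup (Equiv.Perm Ω)) (v : Ω) (A : Finset Ω)
    (hA : A.card = 2) (l : ℕ) (hl : 2 ≤ l)
    (hcard : (orbNbrs G v A).card + l ≤ Fintype.card Ω) : ¬ HasUT G 2 l := by
  classical
  intro hUT
  set T : Finset Ω := Finset.univ \ insert v (orbNbrs G v A) with hT
  have hTcard : l - 1 ≤ T.card := by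
    have h1 : (insert v (orbNbrs G v A)).card ≤ (orbNbrs G v A).card + 1 :=
      Finset.card_insert_le _ _
    have h2 : T.card = Fintype.card Ω - (insert v (orbNbrs G v A)).card := by
      rw [hT, Finset.card_sdiff_of_subset (Finset.subset_univ _), Finset.card_univ]
    omega
  obtain ⟨S, hSsub, hScard⟩ := Finset.exists_subset_card_eq hTcard
  have hvS : v ∉ S := fun hv => by
    have := hSsub hv
    simp [hT] at this
  have hSne : S.Nonempty := by
    rw [← Finset.card_pos, hScard]; omega
  have hvneS : ({v} : Finset Ω) ≠ S := by
    intro h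
    exact hvS (h ▸ Finset.mem_singleton_self v)
  set B : Finset Ω := insert v S with hB
  have hBcard : B.card = l := by
    rw [hB, Finset.card_insert_of_notMem hvS, hScard]; omega
  set P : Finset (Finset Ω) := {({v} : Finset Ω), S} with hP
  have hPpart : IsKPartition P B 2 := by
    refine ⟨?_, ?_, ?_, ?_⟩
    · rw [hP, Finset.card_insert_of_notMem (by simpa using hvneS), Finset.card_singleton]
    · intro p hp
      rcases Finset.mem_insert.mp hp with h | h
      · exact h ▸ ⟨v, Finset.mem_singleton_self v⟩
      · exact (Finset.mem_singleton.mp h) ▸ hSne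
    · intro p hp q hq hpq
      rcases Finset.mem_insert.mp hp with h | h <;>
        rcases Finset.mem_insert.mp hq with h' | h' <;>
          simp (failIfUnchanged := false) only [Finset.mem_singleton] at h h' <;> subst h h' <;>
            simp [Finset.disjoint_singleton_left, Finset.disjoint_singleton_right, hvS] at hpq ⊢
    · ext x
      simp [hP, hB, Finset.mem_biUnion, or_comm]
  obtain ⟨g, hgG, hg⟩ := hUT A B hA hBcard P hPpart
  have himgcard : (A.image g).card = 2 := by
    rw [Finset.card_image_of_injective _ g.injective, hA]
  have hv' : v ∈ A.image g := by
    have h := hg {v} (by simp [hP])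
    have hne : (A.image g ∩ {v}).Nonempty := by rw [← Finset.card_pos, h]; norm_num
    obtain ⟨x, hx⟩ := hne
    rw [Finset.mem_inter, Finset.mem_singleton] at hx
    exact hx.2 ▸ hx.1
  have hSmem : S ∈ P := by simp [hP]
  obtain ⟨s, hs⟩ : (A.image g ∩ S).Nonempty := by
    rw [← Finset.card_pos, hg S hSmem]; norm_num
  rw [Finset.mem_inter] at hs
  have hsv : s ≠ v := fun h => hvS (h ▸ hs.2)
  have hpair : ({v, s} : Finset Ω) ⊆ A.image g := by
    intro x hx
    rcases Finset.mem_insert.mp hx with h | h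
    · exact h ▸ hv'
    · exact (Finset.mem_singleton.mp h) ▸ hs.1
  have hpaircard : ({v, s} : Finset Ω).card = 2 := by
    rw [Finset.card_insert_of_notMem (by simpa using hsv.symm), Finset.card_singleton]
  have heq : A.image g = ({v, s} : Finset Ω) :=
    (Finset.eq_of_subset_of_card_le hpair (by omega)).symm
  have hsnbr : s ∈ orbNbrs G v A := by
    simp only [orbNbrs, Finset.mem_filter, Finset.mem_univ, true_and]
    exact ⟨hsv, g, hgG, heq⟩
  have := hSsub hs.2
  simp [hT, Finset.mem_insert] at this
  exact this.2 hsnbr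

theorem not_two_homogeneous_threshold (G : Subgroup (Equiv.Perm Ω))
    (htrans : ∀ a b : Ω, ∃ g ∈ G, g a = b)
    (hnothom : ¬ IsHomogeneous G 2) :
    ∀ l : ℕ, 2 ≤ l → l ≤ (Fintype.card Ω + 1) / 2 → ¬ HasUT G 2 l := by
  classical
  intro l hl hl2
  rw [IsHomogeneous] at hnothom
  push_neg at hnothom
  obtain ⟨A0, B0, hA0, hB0, hno⟩ := hnothom
  obtain ⟨a, ha⟩ : A0.Nonempty := by rw [← Finset.card_pos, hA0]; norm_num
  obtain ⟨b, hb⟩ : B0.Nonempty := by rw [← Finset.card_pos, hB0]; norm_num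
  set v := a with hv
  obtain ⟨h, hhG, hhb⟩ := htrans b v
  set B1 : Finset Ω := B0.image h with hB1
  have hB1card : B1.card = 2 := by
    rw [hB1, Finset.card_image_of_injective _ h.injective, hB0]
  have hvB1 : v ∈ B1 := by
    rw [hB1, Finset.mem_image]; exact ⟨b, hb, hhb⟩
  have key : ∀ g₁ ∈ G, ∀ g₂ ∈ G, A0.image g₁ ≠ B0.image g₂ := by
    intro g₁ hg₁ g₂ hg₂ heq
    refine hno (g₂⁻¹ * g₁) (mul_mem (inv_mem hg₂) hg₁) ?_
    have h3 : Finset.image (⇑g₂⁻¹) (A0.image ⇑g₁) = Finset.image (⇑g₂⁻¹) (B0.image ⇑g₂) := by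
      rw [heq]
    rw [Finset.image_image, Finset.image_image] at h3
    have h2 : B0.image (⇑g₂⁻¹ ∘ ⇑g₂) = B0 := by
      have h4 : (⇑g₂⁻¹ ∘ ⇑g₂) = id := by funext x; simp
      rw [h4, Finset.image_id]
    rw [h2] at h3
    rw [← h3]
    congr 1
  have hdisj : Disjoint (orbNbrs G v A0) (orbNbrs G v B1) := by
    rw [Finset.disjoint_left]
    intro u huA huB
    simp only [orbNbrs, Finset.mem_filter, Finset.mem_univ, true_and] at huA huB
    obtain ⟨-, g, hgG, hgeq⟩ := huA
    obtain ⟨-, g', hg'G, hg'eq⟩ := huB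
    rw [hB1, Finset.image_image] at hg'eq
    have hcomp : (⇑g' ∘ ⇑h) = ⇑(g' * h) := by funext x; simp
    rw [hcomp] at hg'eq
    exact key g hgG (g' * h) (mul_mem hg'G hhG) (hgeq.trans hg'eq.symm)
  have hsubA : orbNbrs G v A0 ⊆ Finset.univ.erase v := by
    intro u hu
    simp only [orbNbrs, Finset.mem_filter, Finset.mem_univ, true_and] at hu
    exact Finset.mem_erase.mpr ⟨hu.1, Finset.mem_univ u⟩
  have hsubB : orbNbrs G v B1 ⊆ Finset.univ.erase v := by
    intro u hu
    simp only [orbNbrs, Finset.mem_filter, Finset.mem_univ, true_and] at hu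
    exact Finset.mem_erase.mpr ⟨hu.1, Finset.mem_univ u⟩
  have hsum : (orbNbrs G v A0).card + (orbNbrs G v B1).card ≤ Fintype.card Ω - 1 := by
    have := Finset.card_le_card (Finset.union_subset hsubA hsubB)
    rw [Finset.card_union_of_disjoint hdisj] at this
    rw [Finset.card_erase_of_mem (Finset.mem_univ v), Finset.card_univ] at this
    exact this
  have hn2 : 2 ≤ Fintype.card Ω := by
    rw [← hA0, ← Finset.card_univ]
    exact Finset.card_le_univ A0
  by_cases hmin : (orbNbrs G v A0).card ≤ (orbNbrs G v B1).card
  · exact aux_notUT G v A0 hA0 l hl (by omega)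
  · exact aux_notUT G v B1 hB1card l hl (by omega)
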